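/- Let J ⊂ K[x_1,...,x_n] be an Artinian almost revlex ideal with Hilbert function H of R/J, and let r_1 = min{t : x_{n-1}^{t+1} ∈ J} be the first reduction number. Then for every t ≤ r_1, the variable x_n is not a zero-divisor on (R/J)_t, and consequently the Hilbert function of R/(J+(x_n)) equals the first difference ΔH(t) = H(t) - H(t-1) for all t ≤ r_1. -/

import Mathlib

open Finset

/-- Total degree of a monomial (exponent vector). -/
def mdeg {n : ℕ} (α : Fin n →₀ ℕ) : ℕ := α.sum fun _ e => e

/-- A set of exponent vectors is the set of monomials of a monomial ideal. -/
def IsMonIdeal {n : ℕ} (S : Set (Fin n →₀ ℕ)) : Prop :=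
  ∀ α ∈ S, ∀ β : Fin n →₀ ℕ, α + β ∈ S

/-- `α` is a minimal monomial generator of the monomial ideal with monomials `S`. -/
def MinGen {n : ℕ} (S : Set (Fin n →₀ ℕ)) (α : Fin n →₀ ℕ) : Prop :=
  α ∈ S ∧ ∀ β ∈ S, β ≤ α → β = α

/-- Stable monomial ideal (variables ordered `x_1 ≻ ⋯ ≻ x_n`, i.e. index `0` largest). -/
def IsStable {n : ℕ} (S : Set (Fin n →₀ ℕ)) : Prop :=
  ∀ α ∈ S, ∀ m ∈ α.support, (∀ k ∈ α.support, k ≤ m) →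
    ∀ i : Fin n, i < m → α - Finsupp.single m 1 + Finsupp.single i 1 ∈ S

def IsStronglyStable {n : ℕ} (S : Set (Fin n →₀ ℕ)) : Prop :=
  ∀ α ∈ S, ∀ i ∈ α.support, ∀ j : Fin n, j < i →
    α - Finsupp.single i 1 + Finsupp.single j 1 ∈ S

/-- `drlLT α β` : `α` is smaller than `β` in degrevlex with `x_1 ≻ ⋯ ≻ x_n`. -/
def drlLT {n : ℕ} (α β : Fin n →₀ ℕ) : Prop :=
  mdeg α < mdeg β ∨ (mdeg α = mdeg β ∧ ∃ i : Fin n, β i < α i ∧ ∀ j : Fin n, i < j → α j = β j)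

def IsAlmostRevLex {n : ℕ} (S : Set (Fin n →₀ ℕ)) : Prop :=
  IsMonIdeal S ∧ ∀ α, MinGen S α → ∀ β : Fin n →₀ ℕ, mdeg β = mdeg α → drlLT α β → β ∈ S

/-- Combinatorial Hilbert function of `R/J`: number of degree-`t` monomials outside `S`. -/
noncomputable def hilbC {n : ℕ} (S : Set (Fin n →₀ ℕ)) (t : ℕ) : ℕ :=
  {α : Fin n →₀ ℕ | mdeg α = t ∧ α ∉ S}.ncard

/-- `fdiff H s t` is `Δ^s H (t)` with the convention `Δ^s H (0) = 1` for `s ≥ 1`. -/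
def fdiff (H : ℕ → ℕ) : ℕ → ℕ → ℤ
  | 0, t => H t
  | _+1, 0 => 1
  | s+1, t+1 => fdiff H s (t+1) - fdiff H s t

open MvPolynomial

/-- Hilbert function of `R/I` at degree `t`. -/
noncomputable def hilbQ (K : Type*) [Field K] (n : ℕ)
    (I : Ideal (MvPolynomial (Fin n) K)) (t : ℕ) : ℕ :=
  Module.finrank K (Submodule.map (Ideal.Quotient.mkₐ K I).toLinearMap
    (homogeneousSubmodule (Fin n) K t))

/- ### Auxiliary lemmas -/

lemma mdeg_eq_degree {n : ℕ} (α : Fin n →₀ ℕ) : mdeg α = α.degree := rfl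

lemma mdeg_eq_sum {n : ℕ} (α : Fin n →₀ ℕ) : mdeg α = ∑ i, α i :=
  Finsupp.sum_fintype _ _ (fun _ => rfl)

lemma mdeg_add {n : ℕ} (α β : Fin n →₀ ℕ) : mdeg (α + β) = mdeg α + mdeg β := by
  simp [mdeg_eq_sum, Finset.sum_add_distrib]

lemma mdeg_single {n : ℕ} (i : Fin n) (k : ℕ) : mdeg (Finsupp.single i k) = k := by
  simp [mdeg_eq_sum, Finsupp.single_apply]

lemma mdeg_mono {n : ℕ} {α β : Fin n →₀ ℕ} (h : α ≤ β) : mdeg α ≤ mdeg β := by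
  simp only [mdeg_eq_sum]
  exact Finset.sum_le_sum fun i _ => (Finsupp.le_def.mp h) i

lemma mem_of_le_monIdeal {n : ℕ} {S : Set (Fin n →₀ ℕ)} (hS : IsMonIdeal S)
    {β α : Fin n →₀ ℕ} (hβ : β ∈ S) (h : β ≤ α) : α ∈ S := by
  have := hS β hβ (α - β)
  rwa [add_tsub_cancel_of_le h] at this

lemma exists_minGen {n : ℕ} {S : Set (Fin n →₀ ℕ)} {α : Fin n →₀ ℕ} (hα : α ∈ S) :
    ∃ β, MinGen S β ∧ β ≤ α := by
  have hfin : {β | β ∈ S ∧ β ≤ α}.Finite :=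
    (Set.finite_Icc 0 α).subset fun β hβ => Set.mem_Icc.mpr ⟨zero_le, hβ.2⟩
  obtain ⟨β, hβ, hmin⟩ := hfin.exists_minimalFor id _ ⟨α, hα, le_rfl⟩
  exact ⟨β, ⟨hβ.1, fun γ hγ hle => le_antisymm hle (hmin ⟨hγ, hle.trans hβ.2⟩ hle)⟩, hβ.2⟩

/-- Key combinatorial lemma: multiplication by the last variable preserves standard
monomials in low degrees. -/
lemma key_aux_lt2 {n : ℕ} (hn : 2 ≤ n) : n - 2 < n := by omega

lemma key_aux_lt1 {n : ℕ} (hn : 2 ≤ n) : n - 1 < n := by omega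

lemma key_lemma {n : ℕ} (hn : 2 ≤ n) {S : Set (Fin n →₀ ℕ)} (hS : IsAlmostRevLex S)
    {r1 : ℕ} (hr1 : ∀ t, Finsupp.single (⟨n - 2, key_aux_lt2 hn⟩ : Fin n) (t + 1) ∈ S → r1 ≤ t)
    {α : Fin n →₀ ℕ} (hα : α ∉ S) (hd : mdeg α + 1 ≤ r1) :
    α + Finsupp.single (⟨n - 1, key_aux_lt1 hn⟩ : Fin n) 1 ∉ S := by
  set en : Fin n := ⟨n - 1, by omega⟩
  set em : Fin n := ⟨n - 2, by omega⟩
  intro h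
  obtain ⟨β, hβmin, hβle⟩ := exists_minGen h
  have hβen : 1 ≤ β en := by
    by_contra hcon
    apply hα
    refine mem_of_le_monIdeal hS.1 hβmin.1 ?_
    intro i
    rcases eq_or_ne i en with rfl | hne
    · omega
    · have := Finsupp.le_def.mp hβle i
      simpa [Finsupp.single_apply, hne.symm] using this
  have hdle : 1 ≤ mdeg β := le_trans hβen ((mdeg_eq_degree β) ▸ Finsupp.le_degree en β)
  have hmem : Finsupp.single em (mdeg β) ∈ S := by
    refine hS.2 β hβmin _ (mdeg_single _ _) ?_
    right
    refine ⟨(mdeg_single _ _).symm, en, ?_, ?_⟩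
    · have : em ≠ en := by
        simp only [em, en, Fin.mk.injEq, ne_eq]
        omega
      simp [Finsupp.single_apply, this]
      omega
    · intro j hj
      exfalso
      have h1 : (j : ℕ) < n := j.2
      have h2 : (en : ℕ) < (j : ℕ) := hj
      simp only [en] at h2
      omega
  have h1 : r1 ≤ mdeg β - 1 := by
    have : Finsupp.single em ((mdeg β - 1) + 1) ∈ S := by
      rwa [Nat.sub_add_cancel hdle]
    exact hr1 _ this
  have h2 : mdeg β ≤ mdeg α + 1 := by
    have := mdeg_mono hβle
    rwa [mdeg_add, mdeg_single] at this
  omega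

lemma mem_monIdeal_span_iff {n : ℕ} {K : Type*} [Field K] {M : Set (Fin n →₀ ℕ)}
    (hM : IsMonIdeal M) {f : MvPolynomial (Fin n) K} :
    f ∈ Ideal.span ((fun α => monomial α (1 : K)) '' M) ↔ ∀ m ∈ f.support, m ∈ M := by
  rw [mem_ideal_span_monomial_image]
  constructor
  · intro h m hm
    obtain ⟨s, hs, hsm⟩ := h m hm
    exact mem_of_le_monIdeal hM hs hsm
  · exact fun h m hm => ⟨m, h m hm, le_rfl⟩

lemma homogeneousSubmodule_eq_span (K : Type*) [Field K] (n t : ℕ) :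
    homogeneousSubmodule (Fin n) K t
      = Submodule.span K ((fun α => monomial α (1 : K)) '' {α | mdeg α = t}) := by
  apply le_antisymm
  · intro p hp
    rw [← support_sum_monomial_coeff p]
    refine Submodule.sum_mem _ fun d hd => ?_
    have hdeg : mdeg d = t := by
      simp only [mdeg_eq_degree, Finsupp.degree_eq_weight_one]
      exact (mem_homogeneousSubmodule t p).mp hp (mem_support_iff.mp hd)
    have : monomial d (coeff d p) = coeff d p • monomial d (1 : K) := by
      rw [smul_monomial, smul_eq_mul, mul_one]
    rw [this]
    exact Submodule.smul_mem _ _ (Submodule.subset_span ⟨d, hdeg, rfl⟩)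
  · rw [Submodule.span_le]
    rintro _ ⟨α, hα, rfl⟩
    exact isHomogeneous_monomial _ ((mdeg_eq_degree α) ▸ hα)

set_option synthInstance.maxHeartbeats 400000 in
lemma hilbQ_eq_ncard (K : Type*) [Field K] {n : ℕ} (M : Set (Fin n →₀ ℕ))
    (hM : IsMonIdeal M) (t : ℕ) :
    hilbQ K n (Ideal.span ((fun α => monomial α (1 : K)) '' M)) t
      = {α : Fin n →₀ ℕ | mdeg α = t ∧ α ∉ M}.ncard := by
  classical
  set J := Ideal.span ((fun α => monomial α (1 : K)) '' M) with hJ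
  set Q := (Ideal.Quotient.mkₐ K J).toLinearMap with hQ
  set A := {α : Fin n →₀ ℕ | mdeg α = t ∧ α ∉ M} with hA
  have hAfin : A.Finite :=
    (Finsupp.finite_of_degree_le t).subset fun α hα => le_of_eq ((mdeg_eq_degree α) ▸ hα.1)
  haveI : Fintype A := hAfin.fintype
  set v : A → MvPolynomial (Fin n) K := fun a => monomial a.1 (1 : K) with hv
  have liv : LinearIndependent K v := by
    have hvb : v = (basisMonomials (Fin n) K) ∘ Subtype.val := by
      funext a
      exact (congrFun (coe_basisMonomials (Fin n) K) a.1).symm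
    rw [hvb]
    exact (basisMonomials (Fin n) K).linearIndependent.comp _ Subtype.val_injective
  have hsupp : ∀ x ∈ Submodule.span K (Set.range v), ∀ m ∈ x.support, m ∉ M := by
    intro x hx
    induction hx using Submodule.span_induction with
    | mem x hx =>
      obtain ⟨a, rfl⟩ := hx
      intro m hm
      rw [support_monomial] at hm
      simp only [if_neg (one_ne_zero (α := K))] at hm
      rw [Finset.mem_singleton.mp hm]
      exact a.2.2
    | zero => simp
    | add x y _ _ ihx ihy =>
      intro m hm
      rcases Finset.mem_union.mp (support_add hm) with h | h
      exacts [ihx m h, ihy m h]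
    | smul c x _ ih =>
      intro m hm
      exact ih m (support_smul hm)
  have hdisj : Disjoint (Submodule.span K (Set.range v)) (LinearMap.ker Q) := by
    rw [Submodule.disjoint_def]
    intro x hx hker
    have hxJ : x ∈ J := by
      rw [LinearMap.mem_ker] at hker
      have : Ideal.Quotient.mk J x = 0 := hker
      exact Ideal.Quotient.eq_zero_iff_mem.mp this
    have := (mem_monIdeal_span_iff hM).mp hxJ
    by_contra hne
    obtain ⟨m, hm⟩ := support_nonempty.mpr hne
    exact hsupp x hx m hm (this m hm)
  have li2 : LinearIndependent K (Q ∘ v) := liv.map hdisj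
  have hspan : Submodule.map Q (homogeneousSubmodule (Fin n) K t)
      = Submodule.span K (Set.range (Q ∘ v)) := by
    rw [homogeneousSubmodule_eq_span, Submodule.map_span]
    apply le_antisymm
    · rw [Submodule.span_le]
      rintro _ ⟨_, ⟨α, hα, rfl⟩, rfl⟩
      by_cases hmem : α ∈ M
      · have : monomial α (1 : K) ∈ J := by
          rw [mem_monIdeal_span_iff hM]
          intro m hm
          rw [support_monomial] at hm
          simp only [if_neg (one_ne_zero (α := K))] at hm
          rwa [Finset.mem_singleton.mp hm]
        have : Q (monomial α (1 : K)) = 0 :=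
          Ideal.Quotient.eq_zero_iff_mem.mpr this
        rw [this]
        exact Submodule.zero_mem _
      · exact Submodule.subset_span ⟨⟨α, hα, hmem⟩, rfl⟩
    · rw [Submodule.span_le]
      rintro _ ⟨a, rfl⟩
      exact Submodule.subset_span ⟨v a, ⟨a.1, a.2.1, rfl⟩, rfl⟩
  rw [hilbQ]
  rw [show (Ideal.Quotient.mkₐ K J).toLinearMap = Q from rfl, hspan,
    finrank_span_eq_card li2]
  rw [← Nat.card_coe_set_eq, Nat.card_eq_fintype_card]

/-- Let `J ⊂ K[x_1,…,x_n]` be an Artinian almost revlex monomial ideal (monomial set `S`),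
`H` the Hilbert function of `R/J`, and `r_1 = min{t : x_{n-1}^{t+1} ∈ J}`.  Then for every
`t ≤ r_1` multiplication by `x_n` is injective from `(R/J)_{t-1}` to `(R/J)_t` (i.e. `x_n` is
not a zero-divisor on `(R/J)_t`), and consequently the Hilbert function of `R/(J+(x_n))`
equals `ΔH(t) = H(t) - H(t-1)` for all `t ≤ r_1`. -/
theorem xn_nzd_and_deltaH (K : Type*) [Field K] {n : ℕ} (hn : 2 ≤ n)
    (S : Set (Fin n →₀ ℕ)) (hS : IsAlmostRevLex S)
    (hArt : {α : Fin n →₀ ℕ | α ∉ S}.Finite)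
    (I : Ideal (MvPolynomial (Fin n) K))
    (hI : I = Ideal.span ((fun α => (monomial α (1 : K))) '' S))
    (r1 : ℕ)
    (hr1 : Finsupp.single (⟨n - 2, by omega⟩ : Fin n) (r1 + 1) ∈ S ∧
      ∀ t, Finsupp.single (⟨n - 2, by omega⟩ : Fin n) (t + 1) ∈ S → r1 ≤ t) :
    (∀ t, 1 ≤ t → t ≤ r1 →
      ∀ g ∈ homogeneousSubmodule (Fin n) K (t - 1),
        X (⟨n - 1, by omega⟩ : Fin n) * g ∈ I → g ∈ I) ∧
    (∀ t, t ≤ r1 →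
      (hilbQ K n (I ⊔ Ideal.span {X (⟨n - 1, by omega⟩ : Fin n)}) t : ℤ) =
        (hilbQ K n I t : ℤ) - (if t = 0 then 0 else (hilbQ K n I (t - 1) : ℤ))) := by
  classical
  have hnn : 0 < n := by omega
  set en : Fin n := ⟨n - 1, by omega⟩ with hen
  constructor
  · -- Part 1 : x_n is a nonzerodivisor in low degrees
    intro t ht1 htr g hg hXg
    rw [hI, mem_monIdeal_span_iff hS.1] at hXg ⊢
    intro m hm
    by_contra hmS
    have hdegm : mdeg m = t - 1 := by
      simp only [mdeg_eq_degree, Finsupp.degree_eq_weight_one]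
      exact (mem_homogeneousSubmodule _ _).mp hg (mem_support_iff.mp hm)
    refine key_lemma hn hS hr1.2 hmS (by omega) ?_
    apply hXg
    rw [mem_support_iff, add_comm m (Finsupp.single en 1), coeff_X_mul]
    exact mem_support_iff.mp hm
  · -- Part 2 : Hilbert function of R/(J + (x_n))
    intro t htr
    set S' : Set (Fin n →₀ ℕ) := S ∪ {α | 1 ≤ α en} with hS'def
    have hS' : IsMonIdeal S' := by
      rintro α (hα | hα) β
      · exact Or.inl (hS.1 α hα β)
      · refine Or.inr ?_
        simp only [Set.mem_setOf_eq, Finsupp.add_apply] at hα ⊢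
        omega
    have hIdeq : I ⊔ Ideal.span {X en} = Ideal.span ((fun α => monomial α (1 : K)) '' S') := by
      have hX : ({X en} : Set (MvPolynomial (Fin n) K))
          = (fun α => monomial α (1 : K)) '' {Finsupp.single en 1} := by
        simp [X]
      rw [hI, hX, ← Ideal.span_union, ← Set.image_union]
      apply le_antisymm
      · rw [Ideal.span_le]
        rintro _ ⟨α, hα, rfl⟩
        rcases hα with hα | hα
        · exact Ideal.subset_span ⟨α, Or.inl hα, rfl⟩
        · refine Ideal.subset_span ⟨α, Or.inr ?_, rfl⟩
          simp only [Set.mem_singleton_iff] at hα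
          simp [hα, Set.mem_setOf_eq]
      · rw [Ideal.span_le]
        rintro _ ⟨α, hα, rfl⟩
        rcases hα with hα | hα
        · exact Ideal.subset_span ⟨α, Or.inl hα, rfl⟩
        · -- α has positive exponent on en
          rw [SetLike.mem_coe, mem_ideal_span_monomial_image]
          intro xi hxi
          rw [support_monomial, if_neg (one_ne_zero (α := K)), Finset.mem_singleton] at hxi
          subst hxi
          exact ⟨Finsupp.single en 1, Or.inr rfl, Finsupp.single_le_iff.mpr hα⟩
    rw [hIdeq, hI, hilbQ_eq_ncard K S' hS', hilbQ_eq_ncard K S hS.1]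
    rcases Nat.eq_zero_or_pos t with rfl | htpos
    · rw [if_pos rfl, sub_zero]
      congr 2
      ext α
      simp only [Set.mem_setOf_eq, hS'def, Set.mem_union, and_congr_right_iff]
      intro hα
      have hα0 : α en = 0 := by
        have := (mdeg_eq_degree α) ▸ Finsupp.le_degree en α
        omega
      constructor
      · intro h hs; exact h (Or.inl hs)
      · rintro h (hs | hs)
        · exact h hs
        · simp only [Set.mem_setOf_eq, hα0] at hs; omega
    · rw [if_neg (by omega), hilbQ_eq_ncard K S hS.1]
      -- counting identity
      have hdecomp : {α : Fin n →₀ ℕ | mdeg α = t ∧ α ∉ S}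
          = {α : Fin n →₀ ℕ | mdeg α = t ∧ α ∉ S'}
            ∪ ((fun β => β + Finsupp.single en 1) '' {α : Fin n →₀ ℕ | mdeg α = t - 1 ∧ α ∉ S}) := by
        ext α
        constructor
        · rintro ⟨hdeg, hns⟩
          by_cases h1 : 1 ≤ α en
          · right
            have hle : Finsupp.single en 1 ≤ α := Finsupp.single_le_iff.mpr h1
            refine ⟨α - Finsupp.single en 1, ⟨?_, ?_⟩, tsub_add_cancel_of_le hle⟩
            · have : mdeg (α - Finsupp.single en 1 + Finsupp.single en 1) = t := by
                rw [tsub_add_cancel_of_le hle]; exact hdeg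
              rw [mdeg_add, mdeg_single] at this
              omega
            · intro hc
              exact hns (mem_of_le_monIdeal hS.1 hc tsub_le_self)
          · left
            refine ⟨hdeg, ?_⟩
            rintro (hs | hs)
            · exact hns hs
            · exact h1 hs
        · rintro (⟨hdeg, hns⟩ | ⟨β, ⟨hβdeg, hβns⟩, rfl⟩)
          · exact ⟨hdeg, fun hs => hns (Or.inl hs)⟩
          · constructor
            · rw [mdeg_add, mdeg_single, hβdeg]; omega
            · exact key_lemma hn hS hr1.2 hβns (by omega)
      have hfin1 : {α : Fin n →₀ ℕ | mdeg α = t ∧ α ∉ S'}.Finite :=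
        (Finsupp.finite_of_degree_le t).subset fun α hα => le_of_eq ((mdeg_eq_degree α) ▸ hα.1)
      have hfin2 : {α : Fin n →₀ ℕ | mdeg α = t - 1 ∧ α ∉ S}.Finite :=
        (Finsupp.finite_of_degree_le (t - 1)).subset fun α hα =>
          le_of_eq ((mdeg_eq_degree α) ▸ hα.1)
      have hdisj : Disjoint {α : Fin n →₀ ℕ | mdeg α = t ∧ α ∉ S'}
          ((fun β => β + Finsupp.single en 1) '' {α : Fin n →₀ ℕ | mdeg α = t - 1 ∧ α ∉ S}) := by
        rw [Set.disjoint_left]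
        rintro α ⟨_, hns⟩ ⟨β, _, rfl⟩
        apply hns
        refine Or.inr ?_
        simp [Finsupp.add_apply, Finsupp.single_apply]
      have hinj : Function.Injective (fun β : Fin n →₀ ℕ => β + Finsupp.single en 1) :=
        fun a b h => by simpa using add_left_injective (Finsupp.single en 1) h
      have hcount : {α : Fin n →₀ ℕ | mdeg α = t ∧ α ∉ S}.ncard
          = {α : Fin n →₀ ℕ | mdeg α = t ∧ α ∉ S'}.ncard
            + {α : Fin n →₀ ℕ | mdeg α = t - 1 ∧ α ∉ S}.ncard := by
        rw [hdecomp, Set.ncard_union_eq hdisj hfin1 (hfin2.image _),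
          Set.ncard_image_of_injective _ hinj]
      rw [hcount]
      push_cast
      ring
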